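/- Let G be a finite connected simple graph on n ≥ 2 vertices possessing a Hamiltonian path, with e edges. Then the number of Hamiltonian paths of G (as subgraphs) is at most (n/2) · (e/(n−1))^{n−1}. -/

import Mathlib

open SimpleGraph


namespace HamCount

open Finset

variable {V : Type*} [Fintype V] [DecidableEq V] (G : SimpleGraph V) [DecidableRel G.Adj]

/-- Weight of a path list: product of reciprocals of forward branching numbers. -/
noncomputable def wgt : List V → ℝ
  | [] => 1
  | [_] => 1
  | a :: b :: l => ((((b :: l).toFinset.filter (G.Adj a)).card : ℝ))⁻¹ * wgt (b :: l)

/-- Branching numbers along a list. -/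
def brs : List V → List ℕ
  | [] => []
  | [_] => []
  | a :: b :: l => ((b :: l).toFinset.filter (G.Adj a)).card :: brs (b :: l)

lemma wgt_nonneg : ∀ L : List V, 0 ≤ wgt G L
  | [] => by simp [wgt]
  | [_] => by simp [wgt]
  | a :: b :: l => mul_nonneg (by positivity) (wgt_nonneg (b :: l))

lemma wgt_cons (a : V) (l : List V) (hl : l ≠ []) :
    wgt G (a :: l) = ((l.toFinset.filter (G.Adj a)).card : ℝ)⁻¹ * wgt G l := by
  cases l with
  | nil => simp at hl
  | cons b l => rw [wgt]

lemma wgt_eq_inv_prod : ∀ L : List V, wgt G L = (((brs G L).map (fun r : ℕ => (r : ℝ))).prod)⁻¹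
  | [] => by simp [wgt, brs]
  | [_] => by simp [wgt, brs]
  | a :: b :: l => by
    rw [wgt, brs, List.map_cons, List.prod_cons, mul_inv, wgt_eq_inv_prod (b :: l)]

lemma brs_length : ∀ L : List V, (brs G L).length = L.length - 1
  | [] => rfl
  | [_] => rfl
  | a :: b :: l => by
    rw [brs, List.length_cons, brs_length (b :: l)]
    simp

lemma brs_pos : ∀ L : List V, L.Chain' G.Adj → ∀ r ∈ brs G L, 1 ≤ r
  | [] => by simp [brs]
  | [_] => by simp [brs]
  | a :: b :: l => by
    intro hc r hr
    rw [brs, List.mem_cons] at hr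
    rcases hr with rfl | hr
    · refine Finset.card_pos.2 ⟨b, ?_⟩
      simp only [Finset.mem_filter, List.mem_toFinset]
      exact ⟨by simp, (List.isChain_cons.mp hc).1 b rfl⟩
    · exact brs_pos (b :: l) (List.isChain_cons.mp hc).2 r hr

open scoped Classical in
/-- Number of edges of `G` inside a vertex set `s`. -/
noncomputable def edgesIn (s : Finset V) : ℕ :=
  (G.edgeFinset.filter (fun ed => ∀ x ∈ ed, x ∈ s)).card

open scoped Classical in
lemma edgesIn_le (s : Finset V) : edgesIn G s ≤ G.edgeFinset.card :=
  Finset.card_le_card (Finset.filter_subset _ _)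

open scoped Classical in
lemma edgesIn_insert (a : V) (s : Finset V) (ha : a ∉ s) :
    (s.filter (G.Adj a)).card + edgesIn G s ≤ edgesIn G (insert a s) := by
  set A := G.edgeFinset.filter (fun ed => ∀ x ∈ ed, x ∈ s) with hA
  set B := (s.filter (G.Adj a)).image (fun u => s(a, u)) with hB
  have hBcard : B.card = (s.filter (G.Adj a)).card := by
    apply Finset.card_image_of_injective
    intro x y hxy
    exact Sym2.congr_right.mp hxy
  have hdisj : Disjoint A B := by
    rw [Finset.disjoint_left]
    intro ed hA' hB'
    simp only [hB, Finset.mem_image] at hB'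
    obtain ⟨u, _, rfl⟩ := hB'
    simp only [hA, Finset.mem_filter] at hA'
    exact ha (hA'.2 a (by simp))
  have hsub : A ∪ B ⊆ G.edgeFinset.filter (fun ed => ∀ x ∈ ed, x ∈ insert a s) := by
    intro ed hed
    rcases Finset.mem_union.mp hed with h | h
    · simp only [hA, Finset.mem_filter] at h
      exact Finset.mem_filter.2 ⟨h.1, fun x hx => Finset.mem_insert_of_mem (h.2 x hx)⟩
    · simp only [hB, Finset.mem_image] at h
      obtain ⟨u, hu, rfl⟩ := h
      simp only [Finset.mem_filter] at hu
      refine Finset.mem_filter.2 ⟨?_, ?_⟩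
      · rw [SimpleGraph.mem_edgeFinset, SimpleGraph.mem_edgeSet]; exact hu.2
      · intro x hx
        rcases Sym2.mem_iff.mp hx with rfl | rfl
        · exact Finset.mem_insert_self _ _
        · exact Finset.mem_insert_of_mem hu.1
  calc (s.filter (G.Adj a)).card + edgesIn G s = B.card + A.card := by rw [hBcard, edgesIn]
    _ = (A ∪ B).card := by rw [Finset.card_union_of_disjoint hdisj, add_comm]
    _ ≤ _ := Finset.card_le_card hsub

lemma brs_sum_le : ∀ L : List V, L.Nodup → (brs G L).sum ≤ edgesIn G L.toFinset
  | [] => by simp [brs]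
  | [_] => by simp [brs]
  | a :: b :: l => by
    intro hnd
    rw [brs, List.sum_cons]
    have ha : a ∉ (b :: l).toFinset := by
      simp only [List.mem_toFinset]; exact (List.nodup_cons.mp hnd).1
    have h2 : (a :: b :: l).toFinset = insert a ((b :: l).toFinset) := by simp
    rw [h2]
    calc ((b :: l).toFinset.filter (G.Adj a)).card + (brs G (b :: l)).sum
        ≤ ((b :: l).toFinset.filter (G.Adj a)).card + edgesIn G ((b :: l)).toFinset :=
          Nat.add_le_add_left (brs_sum_le (b :: l) (List.nodup_cons.mp hnd).2) _
      _ ≤ _ := edgesIn_insert G a _ ha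

/-- The finite set of path lists starting at `v` and covering `{v} ∪ S`. -/
def pathLists (v : V) (S : Finset V) : Finset (List V) :=
  if S = ∅ then {[v]}
  else (S.filter (G.Adj v)).attach.biUnion
    (fun u => (pathLists u.1 (S.erase u.1)).image (fun L => v :: L))
termination_by S.card
decreasing_by
  exact Finset.card_erase_lt_of_mem (Finset.mem_of_mem_filter _ u.2)

lemma mem_pathLists : ∀ (S : Finset V) (v : V) (L : List V), v ∉ S →
    (L ∈ pathLists G v S ↔
      L.Chain' G.Adj ∧ L.Nodup ∧ L.head? = some v ∧ L.toFinset = insert v S) := by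
  intro S
  induction S using Finset.strongInduction with
  | _ S ih =>
    intro v L hv
    rw [pathLists]
    by_cases hS : S = ∅
    · rw [if_pos hS, Finset.mem_singleton]
      constructor
      · rintro rfl
        refine ⟨List.isChain_singleton _, by simp, rfl, by simp [hS]⟩
      · rintro ⟨hc, hnd, hh, hfs⟩
        cases L with
        | nil => simp at hh
        | cons x L' =>
          have hx : x = v := by simpa using hh
          subst hx
          cases L' with
          | nil => rfl
          | cons y L'' =>
            exfalso
            have hy : y ∈ (x :: y :: L'').toFinset := by simp
            rw [hfs, hS] at hy
            have hy' : y = x := by simpa using hy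
            subst hy'
            simp at hnd
    · rw [if_neg hS]
      simp only [Finset.mem_biUnion, Finset.mem_attach, Finset.mem_image, true_and,
        Subtype.exists]
      constructor
      · rintro ⟨u, hu, L', hL', rfl⟩
        have huS : u ∈ S := Finset.mem_of_mem_filter _ hu
        have hadj : G.Adj v u := (Finset.mem_filter.mp hu).2
        have huE : u ∉ S.erase u := by simp
        obtain ⟨hc, hnd, hh, hfs⟩ :=
          (ih (S.erase u) (Finset.erase_ssubset huS) u L' huE).mp hL'
        rw [Finset.insert_erase huS] at hfs
        have hvL' : v ∉ L' := by
          intro hmem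
          have h3 : v ∈ L'.toFinset := List.mem_toFinset.mpr hmem
          rw [hfs] at h3; exact hv h3
        refine ⟨List.isChain_cons.mpr ⟨?_, hc⟩, List.nodup_cons.mpr ⟨hvL', hnd⟩, rfl, ?_⟩
        · intro y hy; rw [hh] at hy
          have : y = u := by simpa using hy.symm
          subst this; exact hadj
        · simp [hfs]
      · rintro ⟨hc, hnd, hh, hfs⟩
        cases L with
        | nil => simp at hh
        | cons x L' =>
          have hx : x = v := by simpa using hh
          subst hx
          cases L' with
          | nil =>
            exfalso
            obtain ⟨w, hw⟩ := Finset.nonempty_iff_ne_empty.mpr hS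
            have h4 : w ∈ insert x S := Finset.mem_insert_of_mem hw
            rw [← hfs] at h4
            have h5 : w = x := by simpa using h4
            subst h5; exact hv hw
          | cons u L'' =>
            have hvL' : x ∉ (u :: L'') := (List.nodup_cons.mp hnd).1
            have hfs' : (u :: L'').toFinset = S := by
              have h1 : insert x ((u :: L'').toFinset) = insert x S := by
                simpa using hfs
              have h2 : x ∉ (u :: L'').toFinset := by
                simpa using hvL'
              rw [← Finset.erase_insert h2, h1, Finset.erase_insert hv]
            have huS : u ∈ S := by rw [← hfs']; simp
            have hadj : G.Adj x u := (List.isChain_cons.mp hc).1 u rfl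
            refine ⟨u, Finset.mem_filter.mpr ⟨huS, hadj⟩, u :: L'', ?_, rfl⟩
            rw [ih (S.erase u) (Finset.erase_ssubset huS) u _ (by simp)]
            exact ⟨(List.isChain_cons.mp hc).2, (List.nodup_cons.mp hnd).2, rfl,
              by rw [hfs', Finset.insert_erase huS]⟩

lemma head?_of_mem_pathLists {S : Finset V} {v : V} {L : List V} (h : L ∈ pathLists G v S) :
    L.head? = some v := by
  rw [pathLists] at h
  by_cases hS : S = ∅
  · rw [if_pos hS] at h; rw [Finset.mem_singleton] at h; subst h; rfl
  · rw [if_neg hS] at h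
    simp only [Finset.mem_biUnion, Finset.mem_attach, Finset.mem_image, true_and,
      Subtype.exists] at h
    obtain ⟨u, hu, L', hL', rfl⟩ := h
    rfl

lemma sum_wgt_le_one : ∀ (S : Finset V) (v : V), v ∉ S →
    ∑ L ∈ pathLists G v S, wgt G L ≤ 1 := by
  intro S
  induction S using Finset.strongInduction with
  | _ S ih =>
    intro v hv
    rw [pathLists]
    by_cases hS : S = ∅
    · rw [if_pos hS]; simp [wgt]
    · rw [if_neg hS]
      rw [Finset.sum_biUnion]
      · set r : ℕ := (S.filter (G.Adj v)).card with hr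
        have key : ∀ u : {x // x ∈ S.filter (G.Adj v)},
            ∑ L ∈ (pathLists G u.1 (S.erase u.1)).image (fun L => v :: L), wgt G L
              ≤ (r : ℝ)⁻¹ := by
          intro u
          have huS : u.1 ∈ S := Finset.mem_of_mem_filter _ u.2
          rw [Finset.sum_image (by intro x _ y _ h; simpa using h)]
          have hw : ∀ L' ∈ pathLists G u.1 (S.erase u.1),
              wgt G (v :: L') = (r : ℝ)⁻¹ * wgt G L' := by
            intro L' hL'
            have hh := head?_of_mem_pathLists G hL'
            have hne : L' ≠ [] := by intro h; rw [h] at hh; simp at hh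
            have hfs : L'.toFinset = S := by
              have h6 := (mem_pathLists G (S.erase u.1) u.1 L' (by simp)).mp hL'
              rw [h6.2.2.2, Finset.insert_erase huS]
            rw [wgt_cons G v L' hne, hfs]
          rw [Finset.sum_congr rfl hw, ← Finset.mul_sum]
          have hs := ih (S.erase u.1) (Finset.erase_ssubset huS) u.1 (by simp)
          calc (r : ℝ)⁻¹ * ∑ L' ∈ pathLists G u.1 (S.erase u.1), wgt G L'
              ≤ (r : ℝ)⁻¹ * 1 := mul_le_mul_of_nonneg_left hs (by positivity)
            _ = (r : ℝ)⁻¹ := mul_one _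
        calc ∑ u ∈ (S.filter (G.Adj v)).attach,
              ∑ L ∈ (pathLists G u.1 (S.erase u.1)).image (fun L => v :: L), wgt G L
            ≤ ∑ _u ∈ (S.filter (G.Adj v)).attach, (r : ℝ)⁻¹ :=
              Finset.sum_le_sum (fun u _ => key u)
          _ = r * (r : ℝ)⁻¹ := by rw [Finset.sum_const, Finset.card_attach]; simp [hr]
          _ ≤ 1 := by
            rcases eq_or_ne r 0 with h | h
            · simp [h]
            · rw [mul_inv_cancel₀ (by exact_mod_cast h)]
      · intro u hu w hw huw
        simp only [Function.onFun]
        rw [Finset.disjoint_left]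
        intro L hLu hLw
        simp only [Finset.mem_image] at hLu hLw
        obtain ⟨L1, hL1, rfl⟩ := hLu
        obtain ⟨L2, hL2, hEq⟩ := hLw
        have hteq : L2 = L1 := by injection hEq
        subst hteq
        have h1 := head?_of_mem_pathLists G hL1
        have h2 := head?_of_mem_pathLists G hL2
        rw [h1] at h2
        exact huw (Subtype.ext (by injection h2))

lemma one_le_listprod : ∀ l : List ℝ, (∀ x ∈ l, 1 ≤ x) → 1 ≤ l.prod
  | [] => by simp
  | a :: l => by
    intro h
    rw [List.prod_cons]
    have h1 := h a (by simp)
    have h2 := one_le_listprod l (fun x hx => h x (List.mem_cons_of_mem a hx))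
    nlinarith

lemma list_amgm (l : List ℝ) (h0 : ∀ x ∈ l, 0 ≤ x) :
    l.prod ≤ (l.sum / l.length) ^ l.length := by
  rcases Nat.eq_zero_or_pos l.length with hm | hm
  · rw [List.length_eq_zero_iff] at hm
    subst hm; simp
  have hprod : l.prod = ∏ i : Fin l.length, l.get i := by
    rw [← List.map_get_finRange l, Fin.prod_univ_def]; simp
  have hsum : l.sum = ∑ i : Fin l.length, l.get i := by
    rw [← List.map_get_finRange l, Fin.sum_univ_def]; simp
  set m := l.length with hmdef
  have hz : ∀ i ∈ (univ : Finset (Fin m)), (0:ℝ) ≤ l.get i :=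
    fun i _ => h0 _ (l.get_mem _)
  have hw : ∀ i ∈ (univ : Finset (Fin m)), (0:ℝ) ≤ (1:ℝ) := fun _ _ => zero_le_one
  have hw' : (0:ℝ) < ∑ _i ∈ (univ : Finset (Fin m)), (1:ℝ) := by
    simp only [Finset.sum_const, Finset.card_univ, Fintype.card_fin, nsmul_eq_mul, mul_one]
    exact_mod_cast hm
  have key := Real.geom_mean_le_arith_mean (univ : Finset (Fin m)) (fun _ => (1:ℝ))
    (fun i => l.get i) hw hw' hz
  simp only [Real.rpow_one, one_mul, Finset.sum_const, Finset.card_univ, Fintype.card_fin,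
    nsmul_eq_mul, mul_one] at key
  -- key : (∏ i, l.get i) ^ ((m:ℝ))⁻¹ ≤ (∑ i, l.get i) / m
  have hprod0 : (0:ℝ) ≤ ∏ i : Fin m, l.get i := Finset.prod_nonneg hz
  have h2 : ((∏ i : Fin m, l.get i) ^ ((m:ℝ))⁻¹) ^ m ≤ ((∑ i : Fin m, l.get i) / m) ^ m := by
    apply pow_le_pow_left₀ (Real.rpow_nonneg hprod0 _) key
  rwa [← Real.rpow_natCast ((∏ i : Fin m, l.get i) ^ ((m:ℝ))⁻¹) m, ← Real.rpow_mul hprod0,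
    inv_mul_cancel₀ (by exact_mod_cast hm.ne'), Real.rpow_one, ← hprod, ← hsum] at h2

lemma card_pathLists_le (hn : 2 ≤ Fintype.card V) (v : V) :
    ((pathLists G v (univ.erase v)).card : ℝ) ≤
      ((G.edgeFinset.card : ℝ) / ((Fintype.card V - 1 : ℕ) : ℝ)) ^ (Fintype.card V - 1) := by
  set k := Fintype.card V - 1 with hk
  set e := G.edgeFinset.card with he
  set S := (univ : Finset V).erase v with hS
  set P := pathLists G v S with hP
  set B : ℝ := ((e : ℝ) / (k : ℝ)) ^ k with hB
  have hvS : v ∉ S := by simp [hS]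
  have hwgt_ge : ∀ L ∈ P, B⁻¹ ≤ wgt G L ∧ 1 ≤ B := by
    intro L hL
    obtain ⟨hc, hnd, hh, hfs⟩ := (mem_pathLists G S v L hvS).mp hL
    have hfs' : L.toFinset = univ := by
      rw [hfs, hS, Finset.insert_erase (Finset.mem_univ v)]
    have hlen : L.length = Fintype.card V := by
      rw [← List.toFinset_card_of_nodup hnd, hfs', Finset.card_univ]
    have hblen : (brs G L).length = k := by rw [brs_length, hlen]
    have hbsum : (brs G L).sum ≤ e := by
      refine le_trans (brs_sum_le G L hnd) ?_
      rw [hfs']; exact edgesIn_le G _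
    set rl := (brs G L).map (fun r : ℕ => (r : ℝ)) with hrl
    have hrl_len : rl.length = k := by rw [hrl, List.length_map, hblen]
    have hrl_nonneg : ∀ x ∈ rl, (0:ℝ) ≤ x := by
      intro x hx; rw [hrl, List.mem_map] at hx; obtain ⟨r, _, rfl⟩ := hx; positivity
    have hrl_ge1 : ∀ x ∈ rl, (1:ℝ) ≤ x := by
      intro x hx; rw [hrl, List.mem_map] at hx; obtain ⟨r, hr, rfl⟩ := hx
      exact_mod_cast brs_pos G L hc r hr
    have h1le : 1 ≤ rl.prod := one_le_listprod rl hrl_ge1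
    have hsum_eq : rl.sum = (((brs G L).sum : ℕ) : ℝ) := by
      rw [hrl]; exact_mod_cast (Nat.cast_list_sum (brs G L)).symm
    have hsum_le : rl.sum ≤ (e : ℝ) := by rw [hsum_eq]; exact_mod_cast hbsum
    have hsum_nonneg : 0 ≤ rl.sum := by rw [hsum_eq]; positivity
    have hkpos : 0 < (k : ℝ) := by
      have hk0 : 0 < k := by omega
      exact_mod_cast hk0
    have hprodle : rl.prod ≤ B := by
      calc rl.prod ≤ (rl.sum / rl.length) ^ rl.length := list_amgm rl hrl_nonneg
        _ ≤ B := by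
          rw [hrl_len, hB]
          apply pow_le_pow_left₀ (div_nonneg hsum_nonneg hkpos.le)
          gcongr
    constructor
    · rw [wgt_eq_inv_prod, ← hrl]
      exact inv_anti₀ (lt_of_lt_of_le zero_lt_one h1le) hprodle
    · exact le_trans h1le hprodle
  rcases eq_or_ne P ∅ with hPe | hPe
  · rw [hPe]
    simp only [Finset.card_empty, Nat.cast_zero]
    positivity
  · obtain ⟨L₀, hL₀⟩ := Finset.nonempty_iff_ne_empty.mpr hPe
    have hBpos : 0 < B := lt_of_lt_of_le zero_lt_one (hwgt_ge L₀ hL₀).2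
    have hsum1 := sum_wgt_le_one G S v hvS
    have hlow : (P.card : ℝ) * B⁻¹ ≤ ∑ L ∈ P, wgt G L := by
      have := Finset.card_nsmul_le_sum P (wgt G) B⁻¹ (fun L hL => (hwgt_ge L hL).1)
      simpa [nsmul_eq_mul] using this
    have hfin : (P.card : ℝ) * B⁻¹ ≤ 1 := le_trans hlow hsum1
    calc (P.card : ℝ) = (P.card : ℝ) * B⁻¹ * B := by
          field_simp
      _ ≤ 1 * B := mul_le_mul_of_nonneg_right hfin (le_of_lt hBpos)
      _ = B := one_mul B

/-- All path lists covering all of `V`. -/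
def allLists : Finset (List V) :=
  (univ : Finset V).biUnion (fun v => pathLists G v (univ.erase v))

lemma card_allLists_le (hn : 2 ≤ Fintype.card V) :
    ((allLists G).card : ℝ) ≤ (Fintype.card V : ℝ) *
      ((G.edgeFinset.card : ℝ) / ((Fintype.card V - 1 : ℕ) : ℝ)) ^ (Fintype.card V - 1) := by
  rw [allLists, Finset.card_biUnion]
  · push_cast
    calc ∑ v : V, ((pathLists G v (univ.erase v)).card : ℝ)
        ≤ ∑ _v : V, ((G.edgeFinset.card : ℝ) / ((Fintype.card V - 1 : ℕ) : ℝ))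
            ^ (Fintype.card V - 1) :=
          Finset.sum_le_sum (fun v _ => card_pathLists_le G hn v)
      _ = (Fintype.card V : ℝ) * _ := by
          rw [Finset.sum_const, Finset.card_univ, nsmul_eq_mul]
  · intro u _ w _ huw
    rw [Function.onFun, Finset.disjoint_left]
    intro L hLu hLw
    have h1 := head?_of_mem_pathLists G hLu
    have h2 := head?_of_mem_pathLists G hLw
    rw [h1] at h2
    exact huw (by injection h2)

lemma mem_allLists_of (L : List V) (h1 : L.Chain' G.Adj) (h2 : L.Nodup)
    (h3 : L.toFinset = univ) (h4 : L ≠ []) : L ∈ allLists G := by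
  cases L with
  | nil => exact absurd rfl h4
  | cons v L' =>
    apply Finset.mem_biUnion.mpr
    refine ⟨v, Finset.mem_univ v, ?_⟩
    rw [mem_pathLists G (univ.erase v) v _ (by simp)]
    refine ⟨h1, h2, rfl, ?_⟩
    rw [Finset.insert_erase (Finset.mem_univ v)]
    exact h3

section Injection

/-- The canonical vertex list of a Hamiltonian path subgraph. -/
noncomputable def baseList
    (x : {H : SimpleGraph V // H ≤ G ∧ Nonempty (H ≃g pathGraph (Fintype.card V))}) :
    List V :=
  (List.finRange (Fintype.card V)).map (fun i => x.2.2.some.symm i)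

lemma baseList_eq (x) :
    baseList G x = (List.finRange (Fintype.card V)).map (fun i => x.2.2.some.symm i) := rfl

lemma comap_eq (x : {H : SimpleGraph V // H ≤ G ∧ Nonempty (H ≃g pathGraph (Fintype.card V))}) :
    x.1 = (pathGraph (Fintype.card V)).comap x.2.2.some := by
  ext a b
  simp only [comap_adj]
  exact (Iso.map_adj_iff x.2.2.some).symm

lemma baseList_chain (x) : (baseList G x).Chain' G.Adj := by
  unfold List.Chain'
  rw [baseList, List.isChain_map, List.isChain_iff_getElem]
  intro i hi
  simp only [List.length_finRange] at hi
  rw [List.getElem_finRange, List.getElem_finRange]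
  refine x.2.1 ((Iso.map_adj_iff x.2.2.some.symm).mpr ?_)
  rw [pathGraph_adj]
  left
  simp

lemma baseList_nodup (x) : (baseList G x).Nodup :=
  (List.nodup_finRange _).map (fun a b h => (x.2.2.some.symm.toEquiv.injective h))

lemma baseList_toFinset (x) : (baseList G x).toFinset = univ := by
  ext y
  simp only [baseList, List.mem_toFinset, List.mem_map, List.mem_finRange, true_and,
    Finset.mem_univ, iff_true]
  exact ⟨x.2.2.some y, x.2.2.some.toEquiv.symm_apply_apply y⟩

lemma baseList_length (x) : (baseList G x).length = Fintype.card V := by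
  simp [baseList]

lemma baseList_ne_nil (hn : 2 ≤ Fintype.card V) (x) : baseList G x ≠ [] := by
  intro h
  have := baseList_length G x
  rw [h] at this
  simp at this
  omega

lemma pathGraph_rev_adj {n : ℕ} (i j : Fin n) :
    (pathGraph n).Adj i.rev j.rev ↔ (pathGraph n).Adj i j := by
  rw [pathGraph_adj, pathGraph_adj]
  have hi := i.isLt; have hj := j.isLt
  simp only [Fin.val_rev]
  omega

lemma funeq_of_baseList_eq {x y} (h : baseList G x = baseList G y) :
    ∀ i, x.2.2.some.symm i = y.2.2.some.symm i := by
  rw [baseList_eq, baseList_eq, List.map_inj_left] at h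
  exact fun i => h i (List.mem_finRange i)

lemma baseList_inj {x y} (h : baseList G x = baseList G y) : x = y := by
  have hfun := funeq_of_baseList_eq G h
  have hphi : ∀ a : V, (x.2.2.some : V → Fin (Fintype.card V)) a = y.2.2.some a := by
    intro a
    have h1 : y.2.2.some.symm ((x.2.2.some : V → Fin _) a) = a := by
      rw [← hfun]; exact x.2.2.some.toEquiv.symm_apply_apply a
    calc (x.2.2.some : V → Fin _) a
        = y.2.2.some (y.2.2.some.symm ((x.2.2.some : V → Fin _) a)) :=
          (y.2.2.some.toEquiv.apply_symm_apply _).symm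
      _ = y.2.2.some a := by rw [h1]
  apply Subtype.ext
  rw [comap_eq G x, comap_eq G y]
  ext a b
  simp only [comap_adj]
  rw [hphi a, hphi b]

lemma baseList_rev_eq (x) :
    (baseList G x).reverse
      = (List.finRange (Fintype.card V)).map (fun i => x.2.2.some.symm i.rev) := by
  rw [baseList_eq, ← List.map_reverse, List.finRange_reverse, List.map_map]
  rfl

lemma baseList_rev_inj {x y} (h : baseList G x = (baseList G y).reverse) : x = y := by
  rw [baseList_rev_eq, baseList_eq, List.map_inj_left] at h
  have hfun : ∀ i, x.2.2.some.symm i = y.2.2.some.symm i.rev :=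
    fun i => h i (List.mem_finRange i)
  have hphi : ∀ a : V, (y.2.2.some : V → Fin (Fintype.card V)) a
      = ((x.2.2.some : V → Fin _) a).rev := by
    intro a
    have h1 : y.2.2.some.symm ((x.2.2.some : V → Fin _) a).rev = a := by
      rw [← hfun]; exact x.2.2.some.toEquiv.symm_apply_apply a
    calc (y.2.2.some : V → Fin _) a
        = y.2.2.some (y.2.2.some.symm ((x.2.2.some : V → Fin _) a).rev) := by rw [h1]
      _ = ((x.2.2.some : V → Fin _) a).rev := y.2.2.some.toEquiv.apply_symm_apply _
  apply Subtype.ext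
  rw [comap_eq G x, comap_eq G y]
  ext a b
  simp only [comap_adj]
  rw [hphi a, hphi b, pathGraph_rev_adj]

lemma baseList_ne_rev (hn : 2 ≤ Fintype.card V) (x) :
    baseList G x ≠ (baseList G x).reverse := by
  intro h
  rw [baseList_rev_eq, baseList_eq, List.map_inj_left] at h
  have h0 : (0 : ℕ) < Fintype.card V := by omega
  have := h ⟨0, h0⟩ (List.mem_finRange _)
  have h2 := x.2.2.some.symm.toEquiv.injective this
  have h3 := congrArg Fin.val h2
  rw [Fin.val_rev] at h3
  simp at h3
  omega

lemma baseList_mem (hn : 2 ≤ Fintype.card V) (x) : baseList G x ∈ allLists G :=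
  mem_allLists_of G _ (baseList_chain G x) (baseList_nodup G x)
    (baseList_toFinset G x) (baseList_ne_nil G hn x)

lemma baseList_rev_mem (hn : 2 ≤ Fintype.card V) (x) :
    (baseList G x).reverse ∈ allLists G := by
  apply mem_allLists_of G
  · unfold List.Chain'
    rw [List.isChain_reverse]
    exact (baseList_chain G x).imp (fun a b hab => hab.symm)
  · exact List.nodup_reverse.mpr (baseList_nodup G x)
  · rw [List.toFinset_reverse]; exact baseList_toFinset G x
  · simp only [ne_eq, List.reverse_eq_nil_iff]
    exact baseList_ne_nil G hn x

end Injection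

end HamCount

open HamCount

/-- (Lovász) If `G` is a connected graph on `n ≥ 2` vertices with `e`
edges having a Hamiltonian path, then the number of Hamiltonian paths of `G`
(as subgraphs) is at most `(n/2) · (e/(n−1))^(n−1)`. -/
theorem count_hamiltonian_paths_le {V : Type*} [Fintype V] [DecidableEq V]
    (G : SimpleGraph V) [DecidableRel G.Adj]
    (hG : G.Connected) (hn : 2 ≤ Fintype.card V)
    (hham : ∃ H : SimpleGraph V, H ≤ G ∧ Nonempty (H ≃g pathGraph (Fintype.card V))) :
    (Nat.card {H : SimpleGraph V //
        H ≤ G ∧ Nonempty (H ≃g pathGraph (Fintype.card V))} : ℝ) ≤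
      ((Fintype.card V : ℝ) / 2) *
        ((G.edgeFinset.card : ℝ) / ((Fintype.card V : ℝ) - 1)) ^ (Fintype.card V - 1) := by
  classical
  set SS := {H : SimpleGraph V // H ≤ G ∧ Nonempty (H ≃g pathGraph (Fintype.card V))} with hSS
  let F : SS × Bool → {L : List V // L ∈ allLists G} := fun p =>
    if p.2 then ⟨baseList G p.1, baseList_mem G hn p.1⟩
    else ⟨(baseList G p.1).reverse, baseList_rev_mem G hn p.1⟩
  have hFinj : Function.Injective F := by
    rintro ⟨x, bx⟩ ⟨y, by'⟩ h
    simp only [F] at h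
    cases bx <;> cases by' <;> simp only [if_true, if_false, Bool.false_eq_true,
      Subtype.mk.injEq] at h
    · exact Prod.ext (baseList_inj G (List.reverse_injective h)) rfl
    · exfalso
      have hxy : y = x := baseList_rev_inj G h.symm
      subst hxy
      exact baseList_ne_rev G hn y h.symm
    · exfalso
      have hxy : x = y := baseList_rev_inj G h
      subst hxy
      exact baseList_ne_rev G hn x h
    · exact Prod.ext (baseList_inj G h) rfl
  have hcard1 : Nat.card (SS × Bool) ≤ Nat.card {L : List V // L ∈ allLists G} :=
    Nat.card_le_card_of_injective F hFinj
  have hcard2 : Nat.card {L : List V // L ∈ allLists G} = (allLists G).card :=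
    Nat.card_eq_finsetCard _
  have hcard3 : Nat.card (SS × Bool) = 2 * Nat.card SS := by
    rw [Nat.card_prod]
    simp [Nat.card_eq_fintype_card, mul_comm]
  have h2c : 2 * Nat.card SS ≤ (allLists G).card := by omega
  have hA := card_allLists_le G hn
  have hcast : ((Fintype.card V - 1 : ℕ) : ℝ) = (Fintype.card V : ℝ) - 1 := by
    rw [Nat.cast_sub (by omega)]
    norm_num
  rw [hcast] at hA
  have h2cR : 2 * (Nat.card SS : ℝ) ≤ ((allLists G).card : ℝ) := by exact_mod_cast h2c
  have := le_trans h2cR hA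
  linarith
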